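/- Let U = {1, u, v} where u, v are unit-magnitude complex numbers with u ≠ ±1, v ≠ ±1, u ≠ ±v, and let x = I_{u,v}(0,1). Then R(U) = ℤ + xℤ = { m + n·x : m, n ∈ ℤ }; in particular R(U) is a lattice in ℂ. -/

import Mathlib

open Complex

/-- The bracket `[x,y] = x * conj y - y * conj x`. -/
noncomputable def brkt (x y : ℂ) : ℂ := x * (starRingEnd ℂ) y - y * (starRingEnd ℂ) x

/-- `lineInt α β p q` is the intersection point `I_{α,β}(p,q)` of the line through `p`
with direction `α` and the line through `q` with direction `β` (for unit `α ≠ ±β`),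
given by the formula of Buhler et al. -/
noncomputable def lineInt (α β p q : ℂ) : ℂ :=
  brkt α p / brkt α β * β + brkt β q / brkt β α * α

/-- The sets `S n` in the inductive construction. -/
def stepSet (U : Set ℂ) : ℕ → Set ℂ
  | 0 => {0, 1}
  | n + 1 => {z | ∃ α ∈ U, ∃ β ∈ U, α ≠ β ∧ α ≠ -β ∧
      ∃ p ∈ stepSet U n, ∃ q ∈ stepSet U n, z = lineInt α β p q}

/-- `RU U = ⋃ n, S n`. -/
def RU (U : Set ℂ) : Set ℂ := ⋃ n, stepSet U n

/-- Elementary monomials of `U`. -/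
def IsElem (U : Set ℂ) (z : ℂ) : Prop :=
  ∃ α ∈ U, ∃ β ∈ U, α ≠ β ∧ α ≠ -β ∧ z = lineInt α β 0 1

/-- Monomials of `U`, defined inductively. -/
inductive IsMonomial (U : Set ℂ) : ℂ → Prop
  | elementary (α β : ℂ) (hα : α ∈ U) (hβ : β ∈ U) (h1 : α ≠ β) (h2 : α ≠ -β) :
      IsMonomial U (lineInt α β 0 1)
  | step (α β m : ℂ) (hα : α ∈ U) (hβ : β ∈ U) (h1 : α ≠ β) (h2 : α ≠ -β)
      (hm : IsMonomial U m) : IsMonomial U (lineInt α β 0 m)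

/-- `P`: the real numbers arising as length-two monomials `I_{γ,δ}(0,z)` on the real axis. -/
def projSet (U : Set ℂ) : Set ℝ :=
  {r | ∃ γ ∈ U, ∃ δ ∈ U, γ ≠ δ ∧ γ ≠ -δ ∧ ∃ z, IsElem U z ∧ (r : ℂ) = lineInt γ δ 0 z}

/-- `m` is a `ℤ[P]`-linear combination of elementary monomials of `U`. -/
def IsZPComb (U : Set ℂ) (m : ℂ) : Prop :=
  ∃ (n : ℕ) (c : Fin n → ℝ) (z : Fin n → ℂ),
    (∀ i, c i ∈ Subring.closure (projSet U)) ∧ (∀ i, IsElem U (z i)) ∧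
    m = ∑ i, (c i : ℂ) * z i

lemma brkt_conj' (x y : ℂ) : (starRingEnd ℂ) (brkt x y) = - brkt x y := by
  simp only [brkt, map_sub, map_mul, Complex.conj_conj]; ring

lemma brkt_antisymm (x y : ℂ) : brkt y x = - brkt x y := by
  simp only [brkt]; ring

lemma brkt_key (α β z : ℂ) : brkt α z * β - brkt β z * α = z * brkt α β := by
  simp only [brkt]; ring

lemma lineInt_eq {α β : ℂ} (hD : brkt α β ≠ 0) {p q z : ℂ} (t s : ℝ)
    (hp : z = p + ↑t * α) (hq : z = q + ↑s * β) : lineInt α β p q = z := by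
  have hp' : brkt α p = brkt α z := by
    rw [hp]; simp only [brkt, map_add, map_mul, Complex.conj_ofReal]; ring
  have hq' : brkt β q = brkt β z := by
    rw [hq]; simp only [brkt, map_add, map_mul, Complex.conj_ofReal]; ring
  rw [lineInt, hp', hq', brkt_antisymm α β]
  have h2 : brkt α z / brkt α β * β + brkt β z / (-brkt α β) * α
      = (brkt α z * β - brkt β z * α) / brkt α β := by
    rw [div_neg]; ring
  rw [h2, brkt_key α β z, mul_div_cancel_right₀ _ hD]

lemma brkt_ne_zero {α β : ℂ} (hα : ‖α‖ = 1) (hβ : ‖β‖ = 1)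
    (h1 : α ≠ β) (h2 : α ≠ -β) : brkt α β ≠ 0 := by
  intro h
  have hββ : β * (starRingEnd ℂ) β = 1 := by
    rw [Complex.mul_conj, Complex.normSq_eq_norm_sq, hβ]; norm_num
  have h' : α * (starRingEnd ℂ) β = β * (starRingEnd ℂ) α := by
    have := sub_eq_zero.mp h; simpa [brkt, sub_eq_zero] using h
  have hw : (starRingEnd ℂ) (α * (starRingEnd ℂ) β) = α * (starRingEnd ℂ) β := by
    simp only [map_mul, Complex.conj_conj]
    linear_combination -h'
  have hre : ((α * (starRingEnd ℂ) β).re : ℂ) = α * (starRingEnd ℂ) β :=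
    Complex.conj_eq_iff_re.mp hw
  have habs : ‖α * (starRingEnd ℂ) β‖ = 1 := by
    rw [norm_mul, Complex.norm_conj, hα, hβ]; norm_num
  rw [← hre, Complex.norm_real, Real.norm_eq_abs] at habs
  rcases (abs_eq (by norm_num : (0:ℝ) ≤ 1)).mp habs with h3 | h3
  · apply h1
    have : α * ((starRingEnd ℂ) β * β) = 1 * β := by rw [← mul_assoc, ← hre, h3]; norm_num
    simpa [mul_comm, hββ] using this
  · apply h2
    have : α * ((starRingEnd ℂ) β * β) = (-1) * β := by
      rw [← mul_assoc, ← hre, h3]; push_cast; ring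
    simpa [mul_comm, hββ] using this

lemma exists_real_mul {v w : ℂ} (hv : ‖v‖ = 1) (h : brkt v w = 0) :
    ∃ s : ℝ, w = ↑s * v := by
  have hvv : v * (starRingEnd ℂ) v = 1 := by
    rw [Complex.mul_conj, Complex.normSq_eq_norm_sq, hv]; norm_num
  refine ⟨(w * (starRingEnd ℂ) v).re, ?_⟩
  have h' : v * (starRingEnd ℂ) w - w * (starRingEnd ℂ) v = 0 := h
  have hself : (starRingEnd ℂ) (w * (starRingEnd ℂ) v) = w * (starRingEnd ℂ) v := by
    simp only [map_mul, Complex.conj_conj]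
    linear_combination h'
  have hre : ((w * (starRingEnd ℂ) v).re : ℂ) = w * (starRingEnd ℂ) v :=
    Complex.conj_eq_iff_re.mp hself
  calc w = w * ((starRingEnd ℂ) v * v) := by rw [mul_comm ((starRingEnd ℂ) v) v, hvv, mul_one]
    _ = ↑(w * (starRingEnd ℂ) v).re * v := by rw [← mul_assoc, hre]

lemma brkt_self (a : ℂ) : brkt a a = 0 := by simp only [brkt]; ring

lemma brkt_mul_right_of_conj {c : ℂ} (h : (starRingEnd ℂ) c = c) (a b : ℂ) :
    brkt a (c * b) = c * brkt a b := by
  simp only [brkt, map_mul, h]; ring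

lemma x_decomp {u v : ℂ} (hu : ‖u‖ = 1) (hv : ‖v‖ = 1)
    (Duv : brkt u v ≠ 0) :
    ∃ t s : ℝ, lineInt u v 0 1 = ↑t * u ∧ lineInt u v 0 1 = 1 + ↑s * v := by
  have Dvu : brkt v u ≠ 0 := by rw [brkt_antisymm u v]; exact neg_ne_zero.mpr Duv
  have h0 : brkt u 0 = 0 := by simp [brkt]
  have hX : lineInt u v 0 1 = brkt v 1 / brkt v u * u := by
    rw [lineInt, h0, zero_div, zero_mul, zero_add]
  have hc : (starRingEnd ℂ) (brkt v 1 / brkt v u) = brkt v 1 / brkt v u := by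
    rw [map_div₀, brkt_conj', brkt_conj', neg_div_neg_eq]
  have h1 : brkt u (lineInt u v 0 1) = 0 := by
    rw [hX, brkt_mul_right_of_conj hc, brkt_self, mul_zero]
  obtain ⟨t, ht⟩ := exists_real_mul hu h1
  have h2 : brkt v (lineInt u v 0 1 - 1) = 0 := by
    have e : brkt v (lineInt u v 0 1 - 1) = brkt v (lineInt u v 0 1) - brkt v 1 := by
      simp only [brkt, map_sub, map_one]; ring
    rw [e, hX, brkt_mul_right_of_conj hc, div_mul_cancel₀ _ Dvu, sub_self]
  obtain ⟨s, hs⟩ := exists_real_mul hv h2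
  exact ⟨t, s, ht, by linear_combination hs⟩

lemma op1u {u x : ℂ} (hD : brkt 1 u ≠ 0) {t : ℝ} (hxt : x = ↑t * u) (m n m' n' : ℤ) :
    lineInt 1 u ((m:ℂ) + (n:ℂ) * x) ((m':ℂ) + (n':ℂ) * x) = (m':ℂ) + (n:ℂ) * x :=
  lineInt_eq hD ((m':ℝ) - m) (((n:ℝ) - n') * t)
    (by push_cast [hxt]; ring) (by push_cast [hxt]; ring)

lemma op1v {v x : ℂ} (hD : brkt 1 v ≠ 0) {s : ℝ} (hxs : x = 1 + ↑s * v) (m n m' n' : ℤ) :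
    lineInt 1 v ((m:ℂ) + (n:ℂ) * x) ((m':ℂ) + (n':ℂ) * x) = ((m'+n'-n : ℤ):ℂ) + (n:ℂ) * x :=
  lineInt_eq hD ((m':ℝ) + n' - n - m) (((n:ℝ) - n') * s)
    (by push_cast [hxs]; ring) (by push_cast [hxs]; ring)

lemma opu1 {u x : ℂ} (hD : brkt u 1 ≠ 0) {t : ℝ} (hxt : x = ↑t * u) (m n m' n' : ℤ) :
    lineInt u 1 ((m:ℂ) + (n:ℂ) * x) ((m':ℂ) + (n':ℂ) * x) = (m:ℂ) + (n':ℂ) * x :=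
  lineInt_eq hD (((n':ℝ) - n) * t) ((m:ℝ) - m')
    (by push_cast [hxt]; ring) (by push_cast [hxt]; ring)

lemma opuv {u v x : ℂ} (hD : brkt u v ≠ 0) {t s : ℝ} (hxt : x = ↑t * u)
    (hxs : x = 1 + ↑s * v) (m n m' n' : ℤ) :
    lineInt u v ((m:ℂ) + (n:ℂ) * x) ((m':ℂ) + (n':ℂ) * x)
      = (m:ℂ) + ((m'+n'-m : ℤ):ℂ) * x :=
  lineInt_eq hD (((m':ℝ) + n' - m - n) * t) (((m':ℝ) - m) * s)
    (by push_cast [hxt]; ring) (by push_cast [hxs]; ring)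

lemma opv1 {v x : ℂ} (hD : brkt v 1 ≠ 0) {s : ℝ} (hxs : x = 1 + ↑s * v) (m n m' n' : ℤ) :
    lineInt v 1 ((m:ℂ) + (n:ℂ) * x) ((m':ℂ) + (n':ℂ) * x)
      = ((m+n-n' : ℤ):ℂ) + (n':ℂ) * x :=
  lineInt_eq hD (((n':ℝ) - n) * s) ((m:ℝ) + n - n' - m')
    (by push_cast [hxs]; ring) (by push_cast [hxs]; ring)

lemma opvu {u v x : ℂ} (hD : brkt v u ≠ 0) {t s : ℝ} (hxt : x = ↑t * u)
    (hxs : x = 1 + ↑s * v) (m n m' n' : ℤ) :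
    lineInt v u ((m:ℂ) + (n:ℂ) * x) ((m':ℂ) + (n':ℂ) * x)
      = (m':ℂ) + ((m+n-m' : ℤ):ℂ) * x :=
  lineInt_eq hD (((m:ℝ) - m') * s) (((m:ℝ) + n - m' - n') * t)
    (by push_cast [hxs]; ring) (by push_cast [hxt]; ring)

/-- for `U = {1, u, v}` with `1, u, v` pairwise non-±-equal and
`x = I_{u,v}(0,1)`, we have `R(U) = ℤ + xℤ`. -/
theorem stmt5 (u v : ℂ) (hu : ‖u‖ = 1) (hv : ‖v‖ = 1)
    (hu1 : u ≠ 1) (hu1' : u ≠ -1) (hv1 : v ≠ 1) (hv1' : v ≠ -1)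
    (huv : u ≠ v) (huv' : u ≠ -v) :
    RU {1, u, v} = {z | ∃ m n : ℤ, z = (m : ℂ) + (n : ℂ) * lineInt u v 0 1} := by
  set x := lineInt u v 0 1 with hxdef
  -- inequality bookkeeping
  have h1u : (1:ℂ) ≠ u := fun h => hu1 h.symm
  have h1u' : (1:ℂ) ≠ -u := fun h => hu1' (by linear_combination h)
  have h1v : (1:ℂ) ≠ v := fun h => hv1 h.symm
  have h1v' : (1:ℂ) ≠ -v := fun h => hv1' (by linear_combination h)
  have hu1'' : u ≠ -(1:ℂ) := hu1'
  have hv1'' : v ≠ -(1:ℂ) := hv1'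
  have hvu : v ≠ u := fun h => huv h.symm
  have hvu' : v ≠ -u := fun h => huv' (by linear_combination h)
  have habs1 : ‖(1:ℂ)‖ = 1 := by simp
  -- nonvanishing brackets
  have D1u : brkt 1 u ≠ 0 := brkt_ne_zero habs1 hu h1u h1u'
  have D1v : brkt 1 v ≠ 0 := brkt_ne_zero habs1 hv h1v h1v'
  have Du1 : brkt u 1 ≠ 0 := brkt_ne_zero hu habs1 hu1 hu1''
  have Duv : brkt u v ≠ 0 := brkt_ne_zero hu hv huv huv'
  have Dv1 : brkt v 1 ≠ 0 := brkt_ne_zero hv habs1 hv1 hv1''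
  have Dvu : brkt v u ≠ 0 := brkt_ne_zero hv hu hvu hvu'
  obtain ⟨t, s, hxt, hxs⟩ := x_decomp hu hv Duv
  rw [← hxdef] at hxt hxs
  -- membership facts for U
  have m1 : (1:ℂ) ∈ ({1, u, v} : Set ℂ) := by left; rfl
  have mu : u ∈ ({1, u, v} : Set ℂ) := by right; left; rfl
  have mv : v ∈ ({1, u, v} : Set ℂ) := by right; right; rfl
  -- direction ⊆ : every stepSet is in the lattice
  have hsub : ∀ k, stepSet {1, u, v} k ⊆
      {z | ∃ m n : ℤ, z = (m : ℂ) + (n : ℂ) * x} := by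
    intro k
    induction k with
    | zero =>
      rintro z (rfl | rfl)
      · exact ⟨0, 0, by push_cast; ring⟩
      · exact ⟨1, 0, by push_cast; ring⟩
    | succ k ih =>
      rintro z ⟨α, hα, β, hβ, hne1, hne2, p, hp, q, hq, rfl⟩
      obtain ⟨m, n, hpe⟩ := ih hp
      obtain ⟨m', n', hqe⟩ := ih hq
      subst hpe hqe
      simp only [Set.mem_insert_iff, Set.mem_singleton_iff] at hα hβ
      rcases hα with rfl | rfl | rfl <;> rcases hβ with rfl | rfl | rfl
      · exact absurd rfl hne1
      · exact ⟨m', n, by rw [op1u D1u hxt]⟩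
      · exact ⟨m' + n' - n, n, by rw [op1v D1v hxs]⟩
      · exact ⟨m, n', by rw [opu1 Du1 hxt]⟩
      · exact absurd rfl hne1
      · exact ⟨m, m' + n' - m, by rw [opuv Duv hxt hxs]⟩
      · exact ⟨m + n - n', n', by rw [opv1 Dv1 hxs]⟩
      · exact ⟨m', m + n - m', by rw [opvu Dvu hxt hxs]⟩
      · exact absurd rfl hne1
  -- monotonicity of stepSet
  have hstep : ∀ a, stepSet {1, u, v} a ⊆ stepSet {1, u, v} (a + 1) := by
    intro a z hz
    exact ⟨1, m1, u, mu, h1u, h1u', z, hz, z, hz,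
      (lineInt_eq D1u 0 0 (by push_cast; ring) (by push_cast; ring)).symm⟩
  have hmono : ∀ a b, a ≤ b → stepSet {1, u, v} a ⊆ stepSet {1, u, v} b := by
    intro a b hab
    induction hab with
    | refl => exact subset_rfl
    | step h ih => exact fun z hz => hstep _ (ih hz)
  -- closure of RU under intersections
  have hclose : ∀ {α β : ℂ}, α ∈ ({1, u, v} : Set ℂ) → β ∈ ({1, u, v} : Set ℂ) →
      α ≠ β → α ≠ -β → ∀ {p q : ℂ}, p ∈ RU {1, u, v} → q ∈ RU {1, u, v} →
      lineInt α β p q ∈ RU {1, u, v} := by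
    intro α β hα hβ hne1 hne2 p q hp hq
    obtain ⟨a, hp⟩ := Set.mem_iUnion.mp hp
    obtain ⟨b, hq⟩ := Set.mem_iUnion.mp hq
    exact Set.mem_iUnion.mpr ⟨max a b + 1, α, hα, β, hβ, hne1, hne2,
      p, hmono a (max a b) (le_max_left a b) hp,
      q, hmono b (max a b) (le_max_right a b) hq, rfl⟩
  have conv : ∀ {a b : ℂ}, a ∈ RU {1, u, v} → b = a → b ∈ RU {1, u, v} :=
    fun h e => e ▸ h
  -- the six operations on lattice points in RU
  have A : ∀ m n m' n' : ℤ, ((m:ℂ) + (n:ℂ) * x) ∈ RU {1, u, v} →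
      ((m':ℂ) + (n':ℂ) * x) ∈ RU {1, u, v} → ((m':ℂ) + (n:ℂ) * x) ∈ RU {1, u, v} := by
    intro m n m' n' h h'
    have := hclose m1 mu h1u h1u' h h'
    rwa [op1u D1u hxt] at this
  have B : ∀ m n m' n' : ℤ, ((m:ℂ) + (n:ℂ) * x) ∈ RU {1, u, v} →
      ((m':ℂ) + (n':ℂ) * x) ∈ RU {1, u, v} →
      (((m'+n'-n : ℤ):ℂ) + (n:ℂ) * x) ∈ RU {1, u, v} := by
    intro m n m' n' h h'
    have := hclose m1 mv h1v h1v' h h'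
    rwa [op1v D1v hxs] at this
  have C : ∀ m n m' n' : ℤ, ((m:ℂ) + (n:ℂ) * x) ∈ RU {1, u, v} →
      ((m':ℂ) + (n':ℂ) * x) ∈ RU {1, u, v} →
      ((m:ℂ) + ((m'+n'-m : ℤ):ℂ) * x) ∈ RU {1, u, v} := by
    intro m n m' n' h h'
    have := hclose mu mv huv huv' h h'
    rwa [opuv Duv hxt hxs] at this
  have B' : ∀ m n m' n' : ℤ, ((m:ℂ) + (n:ℂ) * x) ∈ RU {1, u, v} →
      ((m':ℂ) + (n':ℂ) * x) ∈ RU {1, u, v} →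
      (((m+n-n' : ℤ):ℂ) + (n':ℂ) * x) ∈ RU {1, u, v} := by
    intro m n m' n' h h'
    have := hclose mv m1 hv1 hv1'' h h'
    rwa [opv1 Dv1 hxs] at this
  -- base points
  have h0mem : (0:ℂ) ∈ RU {1, u, v} := Set.mem_iUnion.mpr ⟨0, by left; rfl⟩
  have h1mem : (1:ℂ) ∈ RU {1, u, v} := Set.mem_iUnion.mpr ⟨0, by right; rfl⟩
  have g00 : (((0:ℤ):ℂ) + ((0:ℤ):ℂ) * x) ∈ RU {1, u, v} :=
    conv h0mem (by push_cast; ring)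
  have g10 : (((1:ℤ):ℂ) + ((0:ℤ):ℂ) * x) ∈ RU {1, u, v} :=
    conv h1mem (by push_cast; ring)
  -- all nonnegative second coordinate on axis
  have gnat : ∀ k : ℕ, (((0:ℤ):ℂ) + ((k:ℤ):ℂ) * x) ∈ RU {1, u, v} := by
    intro k
    induction k with
    | zero => exact conv g00 (by push_cast; ring)
    | succ k ih =>
      have h1k := A 0 k 1 0 ih g10
      have h2 := C 0 0 1 k g00 h1k
      exact conv h2 (by push_cast; ring)
  have gzsnd : ∀ n : ℤ, (((0:ℤ):ℂ) + (n:ℂ) * x) ∈ RU {1, u, v} := by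
    intro n
    rcases n.eq_nat_or_neg with ⟨k, rfl | rfl⟩
    · exact conv (gnat k) (by push_cast; ring)
    · have h1 := B 0 k 0 0 (conv (gnat k) (by push_cast; ring)) g00
      -- gives (-k, k)
      have h2 := A 0 0 (-(k:ℤ)) k g00 (conv h1 (by push_cast; ring))
      -- gives (-k, 0)
      have h3 := C 0 0 (-(k:ℤ)) 0 g00 h2
      -- gives (0, -k)
      exact conv h3 (by push_cast; ring)
  have g1n : ∀ n : ℤ, (((1:ℤ):ℂ) + (n:ℂ) * x) ∈ RU {1, u, v} := by
    intro n
    have := A 0 n 1 0 (gzsnd n) g10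
    exact conv this (by push_cast; ring)
  have gm0 : ∀ m : ℤ, ((m:ℂ) + ((0:ℤ):ℂ) * x) ∈ RU {1, u, v} := by
    intro m
    have := B 0 0 1 (m - 1) g00 (g1n (m - 1))
    exact conv this (by push_cast; ring)
  have good : ∀ m n : ℤ, ((m:ℂ) + (n:ℂ) * x) ∈ RU {1, u, v} := by
    intro m n
    have := A 0 n m 0 (gzsnd n) (gm0 m)
    exact conv this (by ring)
  -- conclude
  ext z
  constructor
  · intro hz
    obtain ⟨k, hk⟩ := Set.mem_iUnion.mp hz
    exact hsub k hk
  · rintro ⟨m, n, rfl⟩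
    exact good m n
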